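/- (Failure of regularity / LICQ for the NOTEARS constraint.) Let d ≥ 1 and B ∈ ℝ^{d×d}. If Tr(exp(B∘B)) = d (i.e., B is a feasible point of the acyclicity constraint), then the Fréchet derivative of the map B ↦ Tr(exp(B∘B)) − d at B is the zero linear functional; in particular, no feasible point of the constraint Tr(exp(B∘B)) − d = 0 is a regular point (the linear independence constraint qualification fails at every feasible point). -/

import Mathlib

open Matrix

attribute [local instance] Matrix.frobeniusNormedAddCommGroup Matrix.frobeniusNormedSpace

section aux
attribute [local instance] Matrix.frobeniusNormedRing Matrix.frobeniusNormedAlgebra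

lemma pow_entry_nonneg {d : ℕ} (M : Matrix (Fin d) (Fin d) ℝ)
    (h : ∀ i j, 0 ≤ M i j) (n : ℕ) : ∀ i j, 0 ≤ (M ^ n) i j := by
  induction n with
  | zero => intro i j; simp only [pow_zero, Matrix.one_apply]; positivity
  | succ n ih =>
      intro i j
      rw [pow_succ, Matrix.mul_apply]
      exact Finset.sum_nonneg fun k _ => mul_nonneg (ih i k) (h k j)

lemma trace_exp_eq_tsum {d : ℕ} (M : Matrix (Fin d) (Fin d) ℝ) :
    Matrix.trace (NormedSpace.exp M)
      = ∑' n : ℕ, ((n.factorial : ℝ)⁻¹ * Matrix.trace (M ^ n)) := by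
  let T : Matrix (Fin d) (Fin d) ℝ →L[ℝ] ℝ :=
    LinearMap.toContinuousLinearMap (Matrix.traceLinearMap (Fin d) ℝ ℝ)
  have h : Matrix.trace (NormedSpace.exp M)
      = T (∑' n : ℕ, ((n.factorial : ℝ)⁻¹) • M ^ n) := by
    rw [NormedSpace.exp_eq_tsum ℝ]; rfl
  rw [h, T.map_tsum (NormedSpace.expSeries_summable' M)]
  simp [T, smul_eq_mul]

lemma trace_exp_summable {d : ℕ} (M : Matrix (Fin d) (Fin d) ℝ) :
    Summable fun n : ℕ => ((n.factorial : ℝ)⁻¹ * Matrix.trace (M ^ n)) := by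
  let T : Matrix (Fin d) (Fin d) ℝ →L[ℝ] ℝ :=
    LinearMap.toContinuousLinearMap (Matrix.traceLinearMap (Fin d) ℝ ℝ)
  have := (NormedSpace.expSeries_summable' (𝕂 := ℝ) M).map T T.continuous
  exact this.congr fun n => by simp [T, smul_eq_mul, Function.comp]

lemma trace_exp_hadamard_ge {d : ℕ} (A : Matrix (Fin d) (Fin d) ℝ) :
    (d : ℝ) ≤ Matrix.trace (NormedSpace.exp (A ⊙ A)) := by
  have hM : ∀ i j, 0 ≤ (A ⊙ A) i j := fun i j => by
    simp only [Matrix.hadamard_apply]; exact mul_self_nonneg _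
  have hterm : ∀ n : ℕ, 0 ≤ ((n.factorial : ℝ)⁻¹ * Matrix.trace ((A ⊙ A) ^ n)) := by
    intro n
    refine mul_nonneg (by positivity) ?_
    exact Finset.sum_nonneg fun i _ => pow_entry_nonneg _ hM n i i
  rw [trace_exp_eq_tsum]
  have h0 : ((0 : ℕ).factorial : ℝ)⁻¹ * Matrix.trace ((A ⊙ A) ^ 0) = (d : ℝ) := by
    simp [Matrix.trace]
  calc (d : ℝ) = ∑ n ∈ Finset.range 1, ((n.factorial : ℝ)⁻¹ * Matrix.trace ((A ⊙ A) ^ n)) := by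
        simp [h0]
    _ ≤ _ := Summable.sum_le_tsum _ (fun n _ => hterm n) (trace_exp_summable _)

end aux

/-- Failure of regularity / LICQ for the NOTEARS constraint: at every feasible point `B` of the
constraint `Tr(exp(B∘B)) − d = 0`, the Fréchet derivative of the constraint function is the zero
linear functional, so no feasible point is regular. -/
theorem notears_constraint_licq_fails
    (d : ℕ) (hd : 1 ≤ d) (B : Matrix (Fin d) (Fin d) ℝ)
    (hfeas : Matrix.trace (NormedSpace.exp (B ⊙ B)) = (d : ℝ)) :
    fderiv ℝ (fun A : Matrix (Fin d) (Fin d) ℝ =>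
      Matrix.trace (NormedSpace.exp (A ⊙ A)) - (d : ℝ)) B = 0 := by
  have hmin : IsLocalMin (fun A : Matrix (Fin d) (Fin d) ℝ =>
      Matrix.trace (NormedSpace.exp (A ⊙ A)) - (d : ℝ)) B := by
    apply Filter.Eventually.of_forall
    intro A
    simp only [hfeas, sub_self]
    linarith [trace_exp_hadamard_ge A]
  exact hmin.fderiv_eq_zero
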